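/- For every instance of unit-length precedence-constrained scheduling on m identical machines, there exists an optimal (minimum-makespan) schedule σ = (S_1,…,S_T) satisfying: (i) for every time slot t with 0 < |H_t| < m (where H_t is the set of non-sink jobs in S_t), every job scheduled after t is either a successor of some job in S_t or is a sink of V(σ); and (ii) every time slot consisting only of sinks occurs after all non-sink jobs have been scheduled. -/

import Mathlib

/-- A feasible schedule for a precedence relation `r` on job set `X` with `m`
machines and makespan `T`. -/
def IsSchedule {V : Type*} [DecidableEq V] (r : V → V → Prop)
    (X : Finset V) (m T : ℕ) (S : Fin T → Finset V) : Prop :=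
  (∀ t, S t ⊆ X) ∧ (∀ v ∈ X, ∃! t, v ∈ S t) ∧ (∀ t, (S t).card ≤ m) ∧
  ∀ u v, r u v → ∀ t t', u ∈ S t → v ∈ S t' → t < t'

/-- Every instance admits an optimal schedule that is sink-adjusted: (i) after
every sink moment (a slot with `0 < |H_t| < m` non-sink jobs) only successors
of jobs in that slot or sinks are scheduled, and (ii) slots consisting only of
sinks come after all non-sinks are scheduled. -/

lemma exists_rmin {V : Type*} (r : V → V → Prop) (htrans : Transitive r)
    (hirr : Irreflexive r) :
    ∀ X : Finset V, X.Nonempty → ∃ a ∈ X, ∀ b ∈ X, ¬ r b a := by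
  classical
  intro X
  induction X using Finset.strongInduction with
  | _ X ih =>
    intro hX
    obtain ⟨a, ha⟩ := hX
    by_cases h : ∀ b ∈ X, ¬ r b a
    · exact ⟨a, ha, h⟩
    · push_neg at h
      obtain ⟨b, hb, hba⟩ := h
      set Y := X.filter (fun x => r x a) with hY
      have hbY : b ∈ Y := by simp [hY, hb, hba]
      have hYss : Y ⊂ X := by
        refine Finset.ssubset_iff_of_subset (Finset.filter_subset _ _) |>.mpr ?_
        exact ⟨a, ha, by simp [hY, hirr a]⟩
      obtain ⟨c, hcY, hc⟩ := ih Y hYss ⟨b, hbY⟩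
      refine ⟨c, (Finset.filter_subset _ _) hcY, ?_⟩
      intro d hd hdc
      have : d ∈ Y := by
        simp only [hY, Finset.mem_filter]
        exact ⟨hd, htrans hdc (Finset.mem_filter.mp hcY).2⟩
      exact hc d this hdc

lemma exists_toplist {V : Type*} [DecidableEq V] (r : V → V → Prop)
    (htrans : Transitive r) (hirr : Irreflexive r) :
    ∀ X : Finset V, ∃ L : List V, L.Nodup ∧ L.toFinset = X ∧
      L.Pairwise (fun a b => ¬ r b a) := by
  intro X
  induction X using Finset.strongInduction with
  | _ X ih =>
    rcases X.eq_empty_or_nonempty with h | h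
    · exact ⟨[], by simp [h]⟩
    · obtain ⟨a, haX, ha⟩ := exists_rmin r htrans hirr X h
      obtain ⟨L, hnd, htf, hpw⟩ := ih (X.erase a) (Finset.erase_ssubset haX)
      have haL : a ∉ L := by
        intro hmem
        have : a ∈ X.erase a := htf ▸ List.mem_toFinset.mpr hmem
        exact (Finset.mem_erase.mp this).1 rfl
      refine ⟨a :: L, List.nodup_cons.mpr ⟨haL, hnd⟩, ?_, ?_⟩
      · rw [List.toFinset_cons, htf, Finset.insert_erase haX]
      · refine List.pairwise_cons.mpr ⟨?_, hpw⟩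
        intro b hbL
        have hbX : b ∈ X := Finset.mem_of_mem_erase (htf ▸ List.mem_toFinset.mpr hbL)
        exact ha b hbX

lemma exists_schedule {V : Type*} [DecidableEq V] (r : V → V → Prop)
    (L : List V) (hnd : L.Nodup) (X : Finset V) (htf : L.toFinset = X)
    (hpw : L.Pairwise (fun a b => ¬ r b a)) (hirr : Irreflexive r)
    (m : ℕ) (hm : 1 ≤ m) :
    ∃ S : Fin L.length → Finset V, IsSchedule r X m L.length S := by
  refine ⟨fun t => {L.get t}, ?_, ?_, ?_, ?_⟩
  · intro t x hx
    rw [Finset.mem_singleton] at hx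
    subst hx
    exact htf ▸ List.mem_toFinset.mpr (L.get_mem t)
  · intro v hv
    have hvL : v ∈ L := List.mem_toFinset.mp (htf ▸ hv)
    obtain ⟨i, hi⟩ := List.mem_iff_get.mp hvL
    refine ⟨i, by simp [← hi], ?_⟩
    intro j hj
    rw [Finset.mem_singleton] at hj
    exact (List.Nodup.get_inj_iff hnd).mp (hi ▸ hj.symm)
  · intro t; simpa using hm
  · intro u v huv t t' hu hv
    rw [Finset.mem_singleton] at hu hv
    subst hu; subst hv
    rcases lt_trichotomy t t' with h | h | h
    · exact h
    · exact absurd huv (h ▸ hirr _)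
    · exact absurd huv (List.pairwise_iff_get.mp hpw t' t h)

lemma swap_lemma {V : Type*} [DecidableEq V] {r : V → V → Prop} (hirr : Irreflexive r)
    {X : Finset V} {m T : ℕ} {S : Fin T → Finset V} (hS : IsSchedule r X m T S)
    (t t' : Fin T) (htt : t < t') (v : V) (hv : v ∈ S t')
    (W : Finset V) (hWS : W ⊆ S t) (hWs : ∀ w ∈ W, ∀ z ∈ X, ¬ r w z)
    (hWcard : W.card ≤ 1) (hcap : (S t \ W).card < m)
    (hpred : ∀ u s, r u v → u ∈ S s → s < t) :
    IsSchedule r X m T (fun i => if i = t then insert v (S t \ W)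
      else if i = t' then ((S t').erase v) ∪ W else S i) := by
  obtain ⟨hsub, huniq, hcard, hprec⟩ := hS
  set S' : Fin T → Finset V := fun i => if i = t then insert v (S t \ W)
      else if i = t' then ((S t').erase v) ∪ W else S i with hS'def
  have htne : t ≠ t' := ne_of_lt htt
  have hvX : v ∈ X := hsub t' hv
  have hvt : v ∉ S t := fun h => htne ((huniq v hvX).unique h hv)
  have hvW : v ∉ W := fun h => hvt (hWS h)
  have eqt : S' t = insert v (S t \ W) := by
    simp [hS'def]
  have eqt' : S' t' = ((S t').erase v) ∪ W := by
    simp [hS'def, Ne.symm htne]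
  have eqo : ∀ i : Fin T, i ≠ t → i ≠ t' → S' i = S i := by
    intro i h h'
    simp [hS'def, h, h']
  have memA : ∀ (x : V) (i : Fin T), x ≠ v → x ∉ W → (x ∈ S' i ↔ x ∈ S i) := by
    intro x i hxv hxW
    by_cases hit : i = t
    · rw [hit, eqt]
      simp only [Finset.mem_insert, Finset.mem_sdiff]
      constructor
      · rintro (h | ⟨h, _⟩)
        · exact absurd h hxv
        · exact h
      · intro h; exact Or.inr ⟨h, hxW⟩
    · by_cases hit' : i = t'
      · rw [hit', eqt']
        simp only [Finset.mem_union, Finset.mem_erase]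
        constructor
        · rintro (⟨_, h⟩ | h)
          · exact h
          · exact absurd h hxW
        · intro h; exact Or.inl ⟨hxv, h⟩
      · rw [eqo i hit hit']
  have memB : ∀ i : Fin T, v ∈ S' i ↔ i = t := by
    intro i
    constructor
    · intro h
      by_contra hit
      by_cases hit' : i = t'
      · rw [hit', eqt'] at h
        simp only [Finset.mem_union, Finset.mem_erase] at h
        rcases h with ⟨h, _⟩ | h
        · exact h rfl
        · exact hvW h
      · rw [eqo i hit hit'] at h
        exact hit' ((huniq v hvX).unique h hv)
    · rintro rfl
      rw [eqt]; exact Finset.mem_insert_self _ _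
  have memC : ∀ w ∈ W, ∀ i : Fin T, w ∈ S' i ↔ i = t' := by
    intro w hw i
    have hwt : w ∈ S t := hWS hw
    have hwX : w ∈ X := hsub t hwt
    constructor
    · intro h
      by_contra hit'
      by_cases hit : i = t
      · rw [hit, eqt] at h
        simp only [Finset.mem_insert, Finset.mem_sdiff] at h
        rcases h with h | ⟨_, h⟩
        · exact hvW (h ▸ hw)
        · exact h hw
      · rw [eqo i hit hit'] at h
        exact hit ((huniq w hwX).unique h hwt)
    · rintro rfl
      rw [eqt']; exact Finset.mem_union_right _ hw
  have hsub' : ∀ i, S' i ⊆ X := by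
    intro i x hx
    by_cases hxv : x = v
    · exact hxv ▸ hvX
    · by_cases hxW : x ∈ W
      · exact hsub t (hWS hxW)
      · exact hsub i ((memA x i hxv hxW).mp hx)
  refine ⟨hsub', ?_, ?_, ?_⟩
  · intro x hx
    by_cases hxv : x = v
    · subst hxv
      exact ⟨t, (memB t).mpr rfl, fun j hj => (memB j).mp hj⟩
    · by_cases hxW : x ∈ W
      · exact ⟨t', (memC x hxW t').mpr rfl, fun j hj => (memC x hxW j).mp hj⟩
      · obtain ⟨s, hs, hu⟩ := huniq x hx
        exact ⟨s, (memA x s hxv hxW).mpr hs, fun j hj => hu j ((memA x j hxv hxW).mp hj)⟩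
  · intro i
    by_cases hit : i = t
    · rw [hit, eqt]
      calc (insert v (S t \ W)).card ≤ (S t \ W).card + 1 := Finset.card_insert_le _ _
        _ ≤ m := hcap
    · by_cases hit' : i = t'
      · rw [hit', eqt']
        have h1 : ((S t').erase v).card = (S t').card - 1 := Finset.card_erase_of_mem hv
        have h2 : 1 ≤ (S t').card := Finset.card_pos.mpr ⟨v, hv⟩
        have h3 := Finset.card_union_le ((S t').erase v) W
        have h4 := hcard t'
        omega
      · rw [eqo i hit hit']
        exact hcard i
  · intro a b hab i j ha hb
    have hbX : b ∈ X := hsub' j hb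
    have haW : a ∉ W := fun h => hWs a h b hbX hab
    by_cases hbv : b = v
    · have hb2 : v ∈ S' j := hbv ▸ hb
      have hab2 : r a v := hbv ▸ hab
      have hj : j = t := (memB j).mp hb2
      have hav : a ≠ v := fun h => hirr v (h ▸ hab2)
      have ha' : a ∈ S i := (memA a i hav haW).mp ha
      exact hj ▸ hpred a i hab2 ha'
    · by_cases hbW : b ∈ W
      · have hj : j = t' := (memC b hbW j).mp hb
        by_cases hav : a = v
        · have ha2 : v ∈ S' i := hav ▸ ha
          exact hj ▸ ((memB i).mp ha2 ▸ htt)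
        · have ha' : a ∈ S i := (memA a i hav haW).mp ha
          exact hj ▸ lt_trans (hprec a b hab i t ha' (hWS hbW)) htt
      · have hb' : b ∈ S j := (memA b j hbv hbW).mp hb
        by_cases hav : a = v
        · have ha2 : v ∈ S' i := hav ▸ ha
          have hab2 : r v b := hav ▸ hab
          have hi : i = t := (memB i).mp ha2
          exact hi ▸ lt_trans htt (hprec v b hab2 t' j hv hb')
        · have ha' : a ∈ S i := (memA a i hav haW).mp ha
          exact hprec a b hab i j ha' hb'

lemma swap_phi {V : Type*} [DecidableEq V] {K : Finset V} {T : ℕ} {S : Fin T → Finset V}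
    (t t' : Fin T) (htt : t < t') (v : V) (hv : v ∈ S t') (hvK : v ∉ K) (hvt : v ∉ S t)
    (W : Finset V) (hWK : W ⊆ K) :
    ∑ i : Fin T, (i : ℕ) * (((if i = t then insert v (S t \ W)
        else if i = t' then ((S t').erase v) ∪ W else S i) \ K).card)
      < ∑ i : Fin T, (i : ℕ) * ((S i \ K).card) := by
  classical
  set S' : Fin T → Finset V := fun i => if i = t then insert v (S t \ W)
      else if i = t' then ((S t').erase v) ∪ W else S i with hS'def
  have htne : t ≠ t' := ne_of_lt htt
  have eqt : S' t = insert v (S t \ W) := by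
    simp [hS'def]
  have eqt' : S' t' = ((S t').erase v) ∪ W := by
    simp [hS'def, Ne.symm htne]
  have eqo : ∀ i : Fin T, i ≠ t → i ≠ t' → S' i = S i := by
    intro i h h'
    simp [hS'def, h, h']
  set g : Fin T → ℕ := fun i => (i : ℕ) * ((S' i \ K).card) with hgdef
  set f : Fin T → ℕ := fun i => (i : ℕ) * ((S i \ K).card) with hfdef
  have h1 : S' t \ K = insert v (S t \ K) := by
    rw [eqt]
    ext x
    simp only [Finset.mem_sdiff, Finset.mem_insert]
    have hxWK : x ∈ W → x ∈ K := fun h => hWK h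
    constructor
    · rintro ⟨h | ⟨ha, _⟩, hk⟩
      · exact Or.inl h
      · exact Or.inr ⟨ha, hk⟩
    · rintro (rfl | ⟨ha, hb⟩)
      · exact ⟨Or.inl rfl, hvK⟩
      · exact ⟨Or.inr ⟨ha, fun hw => hb (hxWK hw)⟩, hb⟩
  have h2 : S' t' \ K = (S t' \ K).erase v := by
    rw [eqt']
    ext x
    simp only [Finset.mem_sdiff, Finset.mem_union, Finset.mem_erase]
    have hxWK : x ∈ W → x ∈ K := fun h => hWK h
    constructor
    · rintro ⟨⟨hne, h⟩ | h, hk⟩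
      · exact ⟨hne, h, hk⟩
      · exact absurd (hxWK h) hk
    · rintro ⟨hne, h, hk⟩
      exact ⟨Or.inl ⟨hne, h⟩, hk⟩
  have hvmem : v ∈ S t' \ K := Finset.mem_sdiff.mpr ⟨hv, hvK⟩
  have hc1 : (S' t \ K).card = (S t \ K).card + 1 := by
    rw [h1, Finset.card_insert_of_notMem (fun h => hvt (Finset.mem_sdiff.mp h).1)]
  have hc2 : (S' t' \ K).card = (S t' \ K).card - 1 := by
    rw [h2, Finset.card_erase_of_mem hvmem]
  have hcpos : 1 ≤ (S t' \ K).card := Finset.card_pos.mpr ⟨v, hvmem⟩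
  have hgt : g t = f t + (t : ℕ) := by
    simp only [hgdef, hfdef, hc1]; ring
  have hgt' : g t' + (t' : ℕ) = f t' := by
    simp only [hgdef, hfdef, hc2]
    have h3 : ((S t' \ K).card - 1) + 1 = (S t' \ K).card := by omega
    calc (t' : ℕ) * ((S t' \ K).card - 1) + (t' : ℕ)
        = (t' : ℕ) * (((S t' \ K).card - 1) + 1) := by ring
      _ = (t' : ℕ) * (S t' \ K).card := by rw [h3]
  have hrest : ∀ i ∈ (Finset.univ.erase t).erase t', g i = f i := by
    intro i hi
    obtain ⟨hit', hi2⟩ := Finset.mem_erase.mp hi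
    obtain ⟨hit, _⟩ := Finset.mem_erase.mp hi2
    simp only [hgdef, hfdef, eqo i hit hit']
  have ht'mem : t' ∈ Finset.univ.erase t := Finset.mem_erase.mpr ⟨Ne.symm htne, Finset.mem_univ _⟩
  have hsplitg : ∑ i : Fin T, g i = ∑ i ∈ (Finset.univ.erase t).erase t', g i + g t' + g t := by
    rw [Finset.sum_erase_add _ _ ht'mem, Finset.sum_erase_add _ _ (Finset.mem_univ t)]
  have hsplitf : ∑ i : Fin T, f i = ∑ i ∈ (Finset.univ.erase t).erase t', f i + f t' + f t := by
    rw [Finset.sum_erase_add _ _ ht'mem, Finset.sum_erase_add _ _ (Finset.mem_univ t)]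
  have heq : ∑ i ∈ (Finset.univ.erase t).erase t', g i
      = ∑ i ∈ (Finset.univ.erase t).erase t', f i := Finset.sum_congr rfl hrest
  have hlt : (t : ℕ) < (t' : ℕ) := htt
  calc ∑ i : Fin T, g i = ∑ i ∈ (Finset.univ.erase t).erase t', f i + g t' + g t := by
        rw [hsplitg, heq]
    _ < ∑ i ∈ (Finset.univ.erase t).erase t', f i + f t' + f t := by omega
    _ = ∑ i : Fin T, f i := hsplitf.symm

theorem exists_optimal_sink_adjusted
    {V : Type*} [DecidableEq V] (r : V → V → Prop) [DecidableRel r]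
    (htrans : Transitive r) (hirr : Irreflexive r)
    (X : Finset V) (m : ℕ) (hm : 1 ≤ m) :
    ∃ (T : ℕ) (S : Fin T → Finset V),
      IsSchedule r X m T S ∧
      (∀ (T' : ℕ) (S' : Fin T' → Finset V), IsSchedule r X m T' S' → T ≤ T') ∧
      (∀ t : Fin T,
        0 < ((S t) \ X.filter (fun v => ∀ w ∈ X, ¬ r v w)).card →
        ((S t) \ X.filter (fun v => ∀ w ∈ X, ¬ r v w)).card < m →
        ∀ t', t < t' → ∀ v ∈ S t',
          (∃ u ∈ S t, r u v) ∨ v ∈ X.filter (fun v => ∀ w ∈ X, ¬ r v w)) ∧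
      (∀ t t' : Fin T, S t ⊆ X.filter (fun v => ∀ w ∈ X, ¬ r v w) →
        (∃ v ∈ S t', v ∉ X.filter (fun v => ∀ w ∈ X, ¬ r v w)) → t' < t) := by
  classical
  set K : Finset V := X.filter (fun v => ∀ w ∈ X, ¬ r v w) with hKdef
  obtain ⟨L, hnd, htf, hpw⟩ := exists_toplist r htrans hirr X
  have hex : ∃ n : ℕ, ∃ S : Fin n → Finset V, IsSchedule r X m n S :=
    ⟨L.length, exists_schedule r L hnd X htf hpw hirr m hm⟩
  set T := Nat.find hex with hTdef
  have hTspec : ∃ S : Fin T → Finset V, IsSchedule r X m T S := Nat.find_spec hex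
  have hTmin : ∀ (T' : ℕ) (S' : Fin T' → Finset V), IsSchedule r X m T' S' → T ≤ T' :=
    fun T' S' h => Nat.find_min' hex ⟨S', h⟩
  have hQex : ∃ n : ℕ, ∃ S : Fin T → Finset V, IsSchedule r X m T S ∧
      (∑ i : Fin T, (i : ℕ) * ((S i \ K).card)) = n := by
    obtain ⟨S, hS⟩ := hTspec
    exact ⟨_, S, hS, rfl⟩
  obtain ⟨S, hS, hΦ⟩ := Nat.find_spec hQex
  have hmin : ∀ (S' : Fin T → Finset V), IsSchedule r X m T S' →
      ¬ (∑ i : Fin T, (i : ℕ) * ((S' i \ K).card))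
        < (∑ i : Fin T, (i : ℕ) * ((S i \ K).card)) := by
    intro S' hS' hlt
    rw [hΦ] at hlt
    exact Nat.find_min hQex hlt ⟨S', hS', rfl⟩
  have key : ∀ t : Fin T, (S t \ K).card < m →
      ¬ ∃ v ∈ X, v ∉ K ∧ (¬ ∃ u ∈ S t, r u v) ∧ ∀ s : Fin T, v ∈ S s → t < s := by
    intro t hcap hvio
    obtain ⟨hsub, huniq, hcard, hprec⟩ := hS
    set B : Finset V := X.filter
      (fun x => x ∉ K ∧ (¬ ∃ u ∈ S t, r u x) ∧ ∀ s : Fin T, x ∈ S s → t < s) with hBdef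
    have hBne : B.Nonempty := by
      obtain ⟨v, hvX, h1, h2, h3⟩ := hvio
      exact ⟨v, by simp only [hBdef, Finset.mem_filter]; exact ⟨hvX, h1, h2, h3⟩⟩
    obtain ⟨v, hvB, hvmin⟩ := exists_rmin r htrans hirr B hBne
    rw [hBdef, Finset.mem_filter] at hvB
    obtain ⟨hvX, hvK, hvsucc, hvafter⟩ := hvB
    obtain ⟨t', hvt', _⟩ := huniq v hvX
    have htt' : t < t' := hvafter t' hvt'
    have hvt : v ∉ S t := fun h => absurd (hvafter t h) (lt_irrefl t)
    have hpred : ∀ u (s : Fin T), r u v → u ∈ S s → s < t := by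
      intro u s huv hus
      by_contra hst
      push_neg at hst
      have huX : u ∈ X := hsub s hus
      rcases eq_or_lt_of_le hst with h | h
      · exact hvsucc ⟨u, h ▸ hus, huv⟩
      · have huB : u ∈ B := by
          rw [hBdef, Finset.mem_filter]
          refine ⟨huX, ?_, ?_, ?_⟩
          · intro huK
            rw [hKdef, Finset.mem_filter] at huK
            exact huK.2 v hvX huv
          · rintro ⟨w, hw, hwu⟩
            exact hvsucc ⟨w, hw, htrans hwu huv⟩
          · intro s' hus'
            have hss : s' = s := (huniq u huX).unique hus' hus
            exact hss ▸ h
        exact hvmin u huB huv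
    have hSX : IsSchedule r X m T S := ⟨hsub, huniq, hcard, hprec⟩
    have hWex : ∃ W : Finset V, W ⊆ S t ∧ (∀ w ∈ W, ∀ z ∈ X, ¬ r w z) ∧
        W.card ≤ 1 ∧ (S t \ W).card < m ∧ W ⊆ K := by
      by_cases h : (S t).card < m
      · exact ⟨∅, Finset.empty_subset _, by simp, by simp,
          by simpa using h,
          Finset.empty_subset _⟩
      · have hcm : (S t).card = m := le_antisymm (hcard t) (le_of_not_gt h)
        have hwex : ∃ w ∈ S t, w ∈ K := by
          by_contra hno
          push_neg at hno
          have hdisj : S t \ K = S t := by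
            apply Finset.sdiff_eq_self_of_disjoint
            exact Finset.disjoint_left.mpr hno
          rw [hdisj, hcm] at hcap
          exact lt_irrefl m hcap
        obtain ⟨w, hwS, hwK⟩ := hwex
        refine ⟨{w}, Finset.singleton_subset_iff.mpr hwS, ?_, by simp, ?_,
          Finset.singleton_subset_iff.mpr hwK⟩
        · intro w' hw' z hz
          rw [Finset.mem_singleton] at hw'
          subst hw'
          rw [hKdef, Finset.mem_filter] at hwK
          exact hwK.2 z hz
        · rw [Finset.sdiff_singleton_eq_erase, Finset.card_erase_of_mem hwS, hcm]
          omega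
    obtain ⟨W, hWS, hWs, hWc, hWcap, hWK⟩ := hWex
    have hS' := swap_lemma hirr hSX t t' htt' v hvt' W hWS hWs hWc hWcap hpred
    have hφ' := swap_phi (K := K) t t' htt' v hvt' hvK hvt W hWK
    exact hmin _ hS' hφ'
  refine ⟨T, S, hS, hTmin, ?_, ?_⟩
  · intro t hpos hlt t' htt' v hvt'
    by_contra hcon
    push_neg at hcon
    obtain ⟨h1, h2⟩ := hcon
    refine key t hlt ⟨v, hS.1 t' hvt', h2, ?_, ?_⟩
    · rintro ⟨u, hu, huv⟩; exact h1 u hu huv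
    · intro s hs
      have hst : s = t' := (hS.2.1 v (hS.1 t' hvt')).unique hs hvt'
      exact hst ▸ htt'
  · intro t t' hsubK hvio
    obtain ⟨v, hvt', hvK⟩ := hvio
    by_contra hcon
    push_neg at hcon
    have htt' : t < t' := by
      rcases eq_or_lt_of_le hcon with h | h
      · exact absurd (hsubK (h ▸ hvt')) hvK
      · exact h
    have hempty : S t \ K = ∅ := Finset.sdiff_eq_empty_iff_subset.mpr hsubK
    refine key t (by rw [hempty, Finset.card_empty]; omega) ⟨v, hS.1 t' hvt', hvK, ?_, ?_⟩
    · rintro ⟨u, hu, huv⟩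
      have huK := hsubK hu
      rw [hKdef, Finset.mem_filter] at huK
      exact huK.2 v (hS.1 t' hvt') huv
    · intro s hs
      have hst : s = t' := (hS.2.1 v (hS.1 t' hvt')).unique hs hvt'
      exact hst ▸ htt'
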